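/- arXiv:1501.01129 — 6 statements merged into one kernel-verified Lean document; each statement's English description precedes it below -/
import Mathlib

section
/- In the polynomial ring k[x₁,x₂,x₃] over a field k, the ideal (x₁x₂, x₂x₃, x₁x₃)·(x₁, x₂x₃)·(x₂, x₁x₃)²·(x₃, x₁x₂)² equals the intersection (x₂,x₃)⁵ ∩ (x₁,x₃)⁴ ∩ (x₁,x₂)⁴ ∩ (x₁,x₂,x₃)⁷. -/
open MvPolynomial

namespace HironakaAux

/-! ## Combinatorial core -/

def L1 : List (ℕ×ℕ×ℕ) := [(1,1,0),(0,1,1),(1,0,1)]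
def L2 : List (ℕ×ℕ×ℕ) := [(1,0,0),(0,1,1)]
def L3 : List (ℕ×ℕ×ℕ) := [(0,1,0),(1,0,1)]
def L4 : List (ℕ×ℕ×ℕ) := [(0,0,1),(1,1,0)]

lemma combBounded : ∀ a b c : Fin 7,
    5 ≤ (b:ℕ) + c → 4 ≤ (a:ℕ) + c → 4 ≤ (a:ℕ) + b → 7 ≤ (a:ℕ) + b + c →
    ∃ e1 ∈ L1, ∃ e2 ∈ L2, ∃ e3 ∈ L3, ∃ e4 ∈ L3, ∃ e5 ∈ L4, ∃ e6 ∈ L4,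
      e1.1 + e2.1 + e3.1 + e4.1 + e5.1 + e6.1 ≤ (a:ℕ) ∧
      e1.2.1 + e2.2.1 + e3.2.1 + e4.2.1 + e5.2.1 + e6.2.1 ≤ (b:ℕ) ∧
      e1.2.2 + e2.2.2 + e3.2.2 + e4.2.2 + e5.2.2 + e6.2.2 ≤ (c:ℕ) := by decide

lemma comb (a b c : ℕ) (h1 : 5 ≤ b + c) (h2 : 4 ≤ a + c) (h3 : 4 ≤ a + b)
    (h4 : 7 ≤ a + b + c) :
    ∃ e1 ∈ L1, ∃ e2 ∈ L2, ∃ e3 ∈ L3, ∃ e4 ∈ L3, ∃ e5 ∈ L4, ∃ e6 ∈ L4,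
      e1.1 + e2.1 + e3.1 + e4.1 + e5.1 + e6.1 ≤ a ∧
      e1.2.1 + e2.2.1 + e3.2.1 + e4.2.1 + e5.2.1 + e6.2.1 ≤ b ∧
      e1.2.2 + e2.2.2 + e3.2.2 + e4.2.2 + e5.2.2 + e6.2.2 ≤ c := by
  obtain ⟨e1, m1, e2, m2, e3, m3, e4, m4, e5, m5, e6, m6, ha, hb, hc⟩ :=
    combBounded ⟨min a 6, by omega⟩ ⟨min b 6, by omega⟩ ⟨min c 6, by omega⟩
      (by simp; omega) (by simp; omega) (by simp; omega) (by simp; omega)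
  simp only at ha hb hc
  exact ⟨e1, m1, e2, m2, e3, m3, e4, m4, e5, m5, e6, m6, by omega, by omega, by omega⟩

/-! ## Weighted degree lower-bound ideals -/

def wdeg (w : Fin 3 → ℕ) (m : Fin 3 →₀ ℕ) : ℕ := w 0 * m 0 + w 1 * m 1 + w 2 * m 2

lemma wdeg_add (w : Fin 3 → ℕ) (u v : Fin 3 →₀ ℕ) :
    wdeg w (u + v) = wdeg w u + wdeg w v := by
  simp [wdeg, Finsupp.add_apply]; ring

variable (k : Type*) [Field k]

def K (w : Fin 3 → ℕ) (n : ℕ) : Ideal (MvPolynomial (Fin 3) k) where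
  carrier := {p | ∀ m ∈ p.support, n ≤ wdeg w m}
  zero_mem' := by simp
  add_mem' := by
    intro p q hp hq m hm
    rcases Finset.mem_union.mp (MvPolynomial.support_add hm) with h | h
    exacts [hp m h, hq m h]
  smul_mem' := by
    intro r p hp m hm
    rw [smul_eq_mul] at hm
    obtain ⟨u, hu, v, hv, rfl⟩ := Finset.mem_add.mp (MvPolynomial.support_mul r p hm)
    calc n ≤ wdeg w v := hp v hv
    _ ≤ wdeg w (u + v) := by rw [wdeg_add]; omega

variable {k}

lemma mem_K {w : Fin 3 → ℕ} {n : ℕ} {p : MvPolynomial (Fin 3) k} :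
    p ∈ K k w n ↔ ∀ m ∈ p.support, n ≤ wdeg w m := Iff.rfl

lemma mul_mem_K {w : Fin 3 → ℕ} {a b : ℕ} {p q : MvPolynomial (Fin 3) k}
    (hp : p ∈ K k w a) (hq : q ∈ K k w b) : p * q ∈ K k w (a + b) := by
  intro m hm
  obtain ⟨u, hu, v, hv, rfl⟩ := Finset.mem_add.mp (MvPolynomial.support_mul p q hm)
  rw [wdeg_add]
  exact add_le_add (hp u hu) (hq v hv)

lemma X_mem_K {w : Fin 3 → ℕ} (i : Fin 3) {n : ℕ} (h : n ≤ w i) :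
    (X i : MvPolynomial (Fin 3) k) ∈ K k w n := by
  intro m hm
  rw [support_X, Finset.mem_singleton] at hm
  subst hm
  refine h.trans (le_of_eq ?_)
  fin_cases i <;> simp [wdeg, Finsupp.single_apply]

lemma pow_le_K {w : Fin 3 → ℕ} {I : Ideal (MvPolynomial (Fin 3) k)}
    (h : I ≤ K k w 1) (n : ℕ) : I ^ n ≤ K k w n := by
  induction n with
  | zero => intro p _ m _; exact Nat.zero_le _
  | succ n ih =>
      rw [pow_succ]
      exact Ideal.mul_le.mpr fun r hr s hs => mul_mem_K (ih hr) (h hs)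

/-! ## Exponent triples as monomials -/

noncomputable def tf (t : ℕ×ℕ×ℕ) : Fin 3 →₀ ℕ :=
  Finsupp.single 0 t.1 + Finsupp.single 1 t.2.1 + Finsupp.single 2 t.2.2

lemma monomial_tf (t : ℕ×ℕ×ℕ) :
    (monomial (tf t) 1 : MvPolynomial (Fin 3) k) =
      X 0 ^ t.1 * X 1 ^ t.2.1 * X 2 ^ t.2.2 := by
  simp [tf, X_pow_eq_monomial, monomial_mul]

end HironakaAux

open HironakaAux

/-- Hironaka's ideal identity: in `k[x₁,x₂,x₃]`,
`(x₁x₂, x₂x₃, x₁x₃)·(x₁, x₂x₃)·(x₂, x₁x₃)²·(x₃, x₁x₂)²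
  = (x₂,x₃)⁵ ∩ (x₁,x₃)⁴ ∩ (x₁,x₂)⁴ ∩ (x₁,x₂,x₃)⁷`. -/
theorem stmt_0 (k : Type*) [Field k] :
    (Ideal.span {X 0 * X 1, X 1 * X 2, X 0 * X 2} :
        Ideal (MvPolynomial (Fin 3) k)) *
      Ideal.span {X 0, X 1 * X 2} *
      Ideal.span {X 1, X 0 * X 2} ^ 2 *
      Ideal.span {X 2, X 0 * X 1} ^ 2 =
    Ideal.span {X 1, X 2} ^ 5 ⊓ Ideal.span {X 0, X 2} ^ 4 ⊓
      Ideal.span {X 0, X 1} ^ 4 ⊓ Ideal.span {X 0, X 1, X 2} ^ 7 := by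
  set I1 : Ideal (MvPolynomial (Fin 3) k) := Ideal.span {X 0 * X 1, X 1 * X 2, X 0 * X 2}
  set I2 : Ideal (MvPolynomial (Fin 3) k) := Ideal.span {X 0, X 1 * X 2}
  set I3 : Ideal (MvPolynomial (Fin 3) k) := Ideal.span {X 1, X 0 * X 2}
  set I4 : Ideal (MvPolynomial (Fin 3) k) := Ideal.span {X 2, X 0 * X 1}
  have memI1 : ∀ e ∈ L1, (monomial (tf e) 1 : MvPolynomial (Fin 3) k) ∈ I1 := by
    intro e he
    simp only [L1, List.mem_cons, List.mem_singleton, List.not_mem_nil, or_false] at he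
    rcases he with rfl | rfl | rfl <;>
      · rw [monomial_tf]; ring_nf
        exact Ideal.subset_span (by norm_num; try tauto)

  have memI2 : ∀ e ∈ L2, (monomial (tf e) 1 : MvPolynomial (Fin 3) k) ∈ I2 := by
    intro e he
    simp only [L2, List.mem_cons, List.mem_singleton, List.not_mem_nil, or_false] at he
    rcases he with rfl | rfl <;>
      · rw [monomial_tf]; ring_nf
        exact Ideal.subset_span (by norm_num; try tauto)
  have memI3 : ∀ e ∈ L3, (monomial (tf e) 1 : MvPolynomial (Fin 3) k) ∈ I3 := by
    intro e he
    simp only [L3, List.mem_cons, List.mem_singleton, List.not_mem_nil, or_false] at he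
    rcases he with rfl | rfl <;>
      · rw [monomial_tf]; ring_nf
        exact Ideal.subset_span (by norm_num; try tauto)
  have memI4 : ∀ e ∈ L4, (monomial (tf e) 1 : MvPolynomial (Fin 3) k) ∈ I4 := by
    intro e he
    simp only [L4, List.mem_cons, List.mem_singleton, List.not_mem_nil, or_false] at he
    rcases he with rfl | rfl <;>
      · rw [monomial_tf]; ring_nf
        exact Ideal.subset_span (by norm_num; try tauto)
  -- the key monomial membership lemma
  have mono_mem : ∀ (d : Fin 3 →₀ ℕ) (c : k), 5 ≤ d 1 + d 2 → 4 ≤ d 0 + d 2 →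
      4 ≤ d 0 + d 1 → 7 ≤ d 0 + d 1 + d 2 → monomial d c ∈ I1 * I2 * I3 ^ 2 * I4 ^ 2 := by
    intro d c h1 h2 h3 h4
    obtain ⟨e1, m1, e2, m2, e3, m3, e4, m4, e5, m5, e6, m6, ha, hb, hc⟩ :=
      comb (d 0) (d 1) (d 2) h1 h2 h3 h4
    set r : Fin 3 →₀ ℕ := tf (d 0 - (e1.1 + e2.1 + e3.1 + e4.1 + e5.1 + e6.1),
      d 1 - (e1.2.1 + e2.2.1 + e3.2.1 + e4.2.1 + e5.2.1 + e6.2.1),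
      d 2 - (e1.2.2 + e2.2.2 + e3.2.2 + e4.2.2 + e5.2.2 + e6.2.2)) with hr
    have heq : (monomial d c : MvPolynomial (Fin 3) k) =
        monomial r c * ((monomial (tf e1) 1 * monomial (tf e2) 1) *
          (monomial (tf e3) 1 * monomial (tf e4) 1) *
          (monomial (tf e5) 1 * monomial (tf e6) 1)) := by
      simp only [monomial_mul, mul_one]
      refine congrArg (fun e => monomial e c) ?_
      ext i
      fin_cases i <;>
        simp [hr, tf, Finsupp.single_apply, Finsupp.add_apply] <;> omega
    rw [heq]
    exact Ideal.mul_mem_left _ _ (Ideal.mul_mem_mul (Ideal.mul_mem_mul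
      (Ideal.mul_mem_mul (memI1 e1 m1) (memI2 e2 m2))
      (by rw [pow_two]; exact Ideal.mul_mem_mul (memI3 e3 m3) (memI3 e4 m4)))
      (by rw [pow_two]; exact Ideal.mul_mem_mul (memI4 e5 m5) (memI4 e6 m6)))
  have sq_le : ∀ (I S : Ideal (MvPolynomial (Fin 3) k)), I ≤ S → I ^ 2 ≤ S ^ 2 := by
    intro I S h; rw [pow_two, pow_two]; exact mul_le_mul' h h
  refine le_antisymm (le_inf (le_inf (le_inf ?_ ?_) ?_) ?_) ?_
  · -- ≤ (x₂,x₃)⁵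
    set S : Ideal (MvPolynomial (Fin 3) k) := Ideal.span {X 1, X 2} with hS
    have h1 : I1 ≤ S := Ideal.span_le.mpr (by
      rintro x hx
      simp only [Set.mem_insert_iff, Set.mem_singleton_iff] at hx
      rcases hx with rfl | rfl | rfl
      · exact Ideal.mul_mem_left _ _ (Ideal.subset_span (by simp))
      · exact Ideal.mul_mem_right _ _ (Ideal.subset_span (by simp))
      · exact Ideal.mul_mem_left _ _ (Ideal.subset_span (by simp)))
    have h3 : I3 ≤ S := Ideal.span_le.mpr (by
      rintro x hx
      simp only [Set.mem_insert_iff, Set.mem_singleton_iff] at hx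
      rcases hx with rfl | rfl
      · exact Ideal.subset_span (by simp)
      · exact Ideal.mul_mem_left _ _ (Ideal.subset_span (by simp)))
    have h4 : I4 ≤ S := Ideal.span_le.mpr (by
      rintro x hx
      simp only [Set.mem_insert_iff, Set.mem_singleton_iff] at hx
      rcases hx with rfl | rfl
      · exact Ideal.subset_span (by simp)
      · exact Ideal.mul_mem_left _ _ (Ideal.subset_span (by simp)))
    have step : I1 * I2 * I3 ^ 2 * I4 ^ 2 ≤ S * S ^ 2 * S ^ 2 :=
      mul_le_mul' (mul_le_mul' (Ideal.mul_le_left.trans h1)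
        (sq_le _ _ h3)) (sq_le _ _ h4)
    exact step.trans (le_of_eq (by ring))
  · -- ≤ (x₁,x₃)⁴
    set S : Ideal (MvPolynomial (Fin 3) k) := Ideal.span {X 0, X 2} with hS
    have h1 : I1 ≤ S := Ideal.span_le.mpr (by
      rintro x hx
      simp only [Set.mem_insert_iff, Set.mem_singleton_iff] at hx
      rcases hx with rfl | rfl | rfl
      · exact Ideal.mul_mem_right _ _ (Ideal.subset_span (by simp))
      · exact Ideal.mul_mem_left _ _ (Ideal.subset_span (by simp))
      · exact Ideal.mul_mem_right _ _ (Ideal.subset_span (by simp)))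
    have h2 : I2 ≤ S := Ideal.span_le.mpr (by
      rintro x hx
      simp only [Set.mem_insert_iff, Set.mem_singleton_iff] at hx
      rcases hx with rfl | rfl
      · exact Ideal.subset_span (by simp)
      · exact Ideal.mul_mem_left _ _ (Ideal.subset_span (by simp)))
    have h4 : I4 ≤ S := Ideal.span_le.mpr (by
      rintro x hx
      simp only [Set.mem_insert_iff, Set.mem_singleton_iff] at hx
      rcases hx with rfl | rfl
      · exact Ideal.subset_span (by simp)
      · exact Ideal.mul_mem_right _ _ (Ideal.subset_span (by simp)))
    have step : I1 * I2 * I3 ^ 2 * I4 ^ 2 ≤ S * S * I3 ^ 2 * S ^ 2 :=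
      mul_le_mul' (mul_le_mul' (mul_le_mul' h1 h2) le_rfl)
        (sq_le _ _ h4)
    refine step.trans ?_
    refine (mul_le_mul' (Ideal.mul_le_left (J := I3 ^ 2)) le_rfl).trans ?_
    exact le_of_eq (by ring)
  · -- ≤ (x₁,x₂)⁴
    set S : Ideal (MvPolynomial (Fin 3) k) := Ideal.span {X 0, X 1} with hS
    have h1 : I1 ≤ S := Ideal.span_le.mpr (by
      rintro x hx
      simp only [Set.mem_insert_iff, Set.mem_singleton_iff] at hx
      rcases hx with rfl | rfl | rfl
      · exact Ideal.mul_mem_right _ _ (Ideal.subset_span (by simp))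
      · exact Ideal.mul_mem_right _ _ (Ideal.subset_span (by simp))
      · exact Ideal.mul_mem_right _ _ (Ideal.subset_span (by simp)))
    have h2 : I2 ≤ S := Ideal.span_le.mpr (by
      rintro x hx
      simp only [Set.mem_insert_iff, Set.mem_singleton_iff] at hx
      rcases hx with rfl | rfl
      · exact Ideal.subset_span (by simp)
      · exact Ideal.mul_mem_right _ _ (Ideal.subset_span (by simp)))
    have h3 : I3 ≤ S := Ideal.span_le.mpr (by
      rintro x hx
      simp only [Set.mem_insert_iff, Set.mem_singleton_iff] at hx
      rcases hx with rfl | rfl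
      · exact Ideal.subset_span (by simp)
      · exact Ideal.mul_mem_right _ _ (Ideal.subset_span (by simp)))
    have step : I1 * I2 * I3 ^ 2 * I4 ^ 2 ≤ S * S * S ^ 2 * I4 ^ 2 :=
      mul_le_mul' (mul_le_mul' (mul_le_mul' h1 h2)
        (sq_le _ _ h3)) le_rfl
    refine step.trans ((Ideal.mul_le_left (J := I4 ^ 2)).trans (le_of_eq (by ring)))
  · -- ≤ (x₁,x₂,x₃)⁷
    set S : Ideal (MvPolynomial (Fin 3) k) := Ideal.span {X 0, X 1, X 2} with hS
    have hX : ∀ i : Fin 3, (X i : MvPolynomial (Fin 3) k) ∈ S := by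
      intro i; fin_cases i <;> exact Ideal.subset_span (by simp)
    have h1 : I1 ≤ S ^ 2 := Ideal.span_le.mpr (by
      rintro x hx
      simp only [Set.mem_insert_iff, Set.mem_singleton_iff] at hx
      rcases hx with rfl | rfl | rfl <;>
        · rw [pow_two]; exact Ideal.mul_mem_mul (hX _) (hX _)
    )
    have h2 : I2 ≤ S := Ideal.span_le.mpr (by
      rintro x hx
      simp only [Set.mem_insert_iff, Set.mem_singleton_iff] at hx
      rcases hx with rfl | rfl
      · exact hX 0
      · exact Ideal.mul_mem_right _ _ (hX 1))
    have h3 : I3 ≤ S := Ideal.span_le.mpr (by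
      rintro x hx
      simp only [Set.mem_insert_iff, Set.mem_singleton_iff] at hx
      rcases hx with rfl | rfl
      · exact hX 1
      · exact Ideal.mul_mem_right _ _ (hX 0))
    have h4 : I4 ≤ S := Ideal.span_le.mpr (by
      rintro x hx
      simp only [Set.mem_insert_iff, Set.mem_singleton_iff] at hx
      rcases hx with rfl | rfl
      · exact hX 2
      · exact Ideal.mul_mem_right _ _ (hX 0))
    have step : I1 * I2 * I3 ^ 2 * I4 ^ 2 ≤ S ^ 2 * S * S ^ 2 * S ^ 2 :=
      mul_le_mul' (mul_le_mul' (mul_le_mul' h1 h2)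
        (sq_le _ _ h3)) (sq_le _ _ h4)
    exact step.trans (le_of_eq (by ring))
  · -- RHS ≤ LHS
    intro p hp
    rw [Submodule.mem_inf, Submodule.mem_inf, Submodule.mem_inf] at hp
    obtain ⟨⟨⟨hA, hB⟩, hC⟩, hD⟩ := hp
    have hKA : Ideal.span {(X 1 : MvPolynomial (Fin 3) k), X 2} ^ 5 ≤ K k ![0,1,1] 5 := by
      refine pow_le_K (Ideal.span_le.mpr ?_) 5
      rintro x hx
      simp only [Set.mem_insert_iff, Set.mem_singleton_iff] at hx
      rcases hx with rfl | rfl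
      exacts [X_mem_K 1 (by decide), X_mem_K 2 (by decide)]
    have hKB : Ideal.span {(X 0 : MvPolynomial (Fin 3) k), X 2} ^ 4 ≤ K k ![1,0,1] 4 := by
      refine pow_le_K (Ideal.span_le.mpr ?_) 4
      rintro x hx
      simp only [Set.mem_insert_iff, Set.mem_singleton_iff] at hx
      rcases hx with rfl | rfl
      exacts [X_mem_K 0 (by decide), X_mem_K 2 (by decide)]
    have hKC : Ideal.span {(X 0 : MvPolynomial (Fin 3) k), X 1} ^ 4 ≤ K k ![1,1,0] 4 := by
      refine pow_le_K (Ideal.span_le.mpr ?_) 4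
      rintro x hx
      simp only [Set.mem_insert_iff, Set.mem_singleton_iff] at hx
      rcases hx with rfl | rfl
      exacts [X_mem_K 0 (by decide), X_mem_K 1 (by decide)]
    have hKD : Ideal.span {(X 0 : MvPolynomial (Fin 3) k), X 1, X 2} ^ 7 ≤ K k ![1,1,1] 7 := by
      refine pow_le_K (Ideal.span_le.mpr ?_) 7
      rintro x hx
      simp only [Set.mem_insert_iff, Set.mem_singleton_iff] at hx
      rcases hx with rfl | rfl | rfl
      exacts [X_mem_K 0 (by decide), X_mem_K 1 (by decide), X_mem_K 2 (by decide)]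
    rw [p.as_sum]
    refine Ideal.sum_mem _ fun m hm => ?_
    have a1 := hKA hA m hm
    have a2 := hKB hB m hm
    have a3 := hKC hC m hm
    have a4 := hKD hD m hm
    simp only [wdeg, Matrix.cons_val_zero, Matrix.cons_val_one, Matrix.head_cons,
      Matrix.cons_val_two, Matrix.tail_cons, one_mul, zero_mul, mul_one] at a1 a2 a3 a4
    exact mono_mem m _ (by omega) (by omega) (by omega) (by omega)
end

section
/- In the polynomial ring k[x₁,x₂,x₃] over a field k, the ideal (x₂,x₃)⁵ ∩ (x₁,x₃)⁴ equals the product ideal (x₁x₂, x₃)⁴ · (x₂, x₃). -/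
set_option maxHeartbeats 1000000


open MvPolynomial

private lemma aux_coeff_mul_zero {k : Type*} [Field k] (i j : Fin 3) (n : ℕ)
    (p g : MvPolynomial (Fin 3) k)
    (hp : ∀ ν : Fin 3 →₀ ℕ, ν i + ν j < n → coeff ν p = 0)
    (ν : Fin 3 →₀ ℕ) (hν : ν i + ν j < n) : coeff ν (p * g) = 0 := by
  rw [coeff_mul]
  refine Finset.sum_eq_zero fun x hx => ?_
  rw [Finset.HasAntidiagonal.mem_antidiagonal] at hx
  have hxi : x.1 i + x.2 i = ν i := by rw [← hx]; simp
  have hxj : x.1 j + x.2 j = ν j := by rw [← hx]; simp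
  rw [hp x.1 (by omega), zero_mul]

private lemma aux_vanish {k : Type*} [Field k] (i j : Fin 3) (hij : i ≠ j) (n : ℕ)
    (f : MvPolynomial (Fin 3) k)
    (hf : f ∈ (Ideal.span {X i, X j} : Ideal (MvPolynomial (Fin 3) k)) ^ n) :
    ∀ μ : Fin 3 →₀ ℕ, μ i + μ j < n → coeff μ f = 0 := by
  induction n generalizing f with
  | zero => intro μ h; exact absurd h (Nat.not_lt_zero _)
  | succ n ih =>
    rw [pow_succ] at hf
    refine Submodule.mul_induction_on (C := fun g => ∀ μ : Fin 3 →₀ ℕ,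
      μ i + μ j < n + 1 → coeff μ g = 0) hf ?_ ?_
    · intro p hp q hq μ hμ
      obtain ⟨a, b, rfl⟩ := Ideal.mem_span_pair.mp hq
      have hrw : p * (a * X i + b * X j) = p * a * X i + p * b * X j := by ring
      rw [hrw, coeff_add, coeff_mul_X', coeff_mul_X']
      have hi : (if i ∈ μ.support then coeff (μ - Finsupp.single i (1:ℕ)) (p * a) else 0) = 0 := by
        split_ifs with h
        · have hμi : μ i ≠ 0 := Finsupp.mem_support_iff.mp h
          have e1 : (μ - Finsupp.single i (1:ℕ)) i = μ i - 1 := by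
            simp [Finsupp.tsub_apply, Finsupp.single_apply]
          have e2 : (μ - Finsupp.single i (1:ℕ)) j = μ j := by
            simp [Finsupp.tsub_apply, Finsupp.single_apply, hij]
          exact aux_coeff_mul_zero i j n p a (fun ν hν => ih p hp ν hν) _ (by omega)
        · rfl
      have hj : (if j ∈ μ.support then coeff (μ - Finsupp.single j (1:ℕ)) (p * b) else 0) = 0 := by
        split_ifs with h
        · have hμj : μ j ≠ 0 := Finsupp.mem_support_iff.mp h
          have e1 : (μ - Finsupp.single j (1:ℕ)) j = μ j - 1 := by
            simp [Finsupp.tsub_apply, Finsupp.single_apply]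
          have e2 : (μ - Finsupp.single j (1:ℕ)) i = μ i := by
            simp [Finsupp.tsub_apply, Finsupp.single_apply, Ne.symm hij]
          exact aux_coeff_mul_zero i j n p b (fun ν hν => ih p hp ν hν) _ (by omega)
        · rfl
      rw [hi, hj, add_zero]
    · intro g h hg hh μ hμ
      rw [coeff_add, hg μ hμ, hh μ hμ, add_zero]

private lemma aux_span_pair_pow_le {k : Type*} [Field k]
    (a b : MvPolynomial (Fin 3) k) (n : ℕ) :
    (Ideal.span {a, b}) ^ n ≤
      Ideal.span {g | ∃ m ≤ n, g = a ^ m * b ^ (n - m)} := by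
  induction n with
  | zero =>
    rw [pow_zero, Ideal.one_eq_top, top_le_iff, Ideal.eq_top_iff_one]
    exact Ideal.subset_span ⟨0, le_rfl, by simp⟩
  | succ n ih =>
    rw [pow_succ]
    refine le_trans (Ideal.mul_mono ih le_rfl) ?_
    rw [Ideal.span_mul_span]
    refine Ideal.span_le.mpr ?_
    intro x hx
    simp only [Set.mem_mul] at hx
    obtain ⟨s, ⟨m, hm, rfl⟩, t, ht, rfl⟩ := hx
    rcases ht with rfl | rfl
    · exact Ideal.subset_span ⟨m + 1, by omega, by rw [Nat.succ_sub_succ]; ring⟩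
    · exact Ideal.subset_span ⟨m, by omega, by rw [Nat.succ_sub hm, pow_succ]; ring⟩

private noncomputable def auxS (k : Type*) [Field k] : Ideal (MvPolynomial (Fin 3) k) :=
  Ideal.span {X 0 ^ 4 * X 1 ^ 5 * X 2 ^ 0, X 0 ^ 3 * X 1 ^ 4 * X 2 ^ 1,
    X 0 ^ 2 * X 1 ^ 3 * X 2 ^ 2, X 0 ^ 1 * X 1 ^ 2 * X 2 ^ 3,
    X 0 ^ 0 * X 1 ^ 1 * X 2 ^ 4, X 0 ^ 0 * X 1 ^ 0 * X 2 ^ 5}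

private noncomputable def auxExp (c : ℕ) : Fin 3 →₀ ℕ :=
  Finsupp.single 0 (4 - c) + Finsupp.single 1 (5 - c) + Finsupp.single 2 c

private lemma aux_key {k : Type*} [Field k] (a b d : ℕ) :
    (X 0 ^ a * X 1 ^ b * X 2 ^ d : MvPolynomial (Fin 3) k) =
      monomial (Finsupp.single 0 a + Finsupp.single 1 b + Finsupp.single 2 d) 1 := by
  rw [X_pow_eq_monomial, X_pow_eq_monomial, X_pow_eq_monomial, monomial_mul, monomial_mul,
    one_mul, one_mul]

private lemma auxExp_mem {k : Type*} [Field k] (c : ℕ) (hc : c ≤ 5) :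
    (monomial (auxExp c) (1 : k)) ∈ auxS k := by
  interval_cases c <;>
    refine Ideal.subset_span ?_ <;>
    simp only [auxS, auxExp, aux_key, Set.mem_insert_iff, Set.mem_singleton_iff,
      monomial_eq_monomial_iff] <;>
    norm_num

private lemma aux_mono_mem {k : Type*} [Field k] (μ : Fin 3 →₀ ℕ) (r : k)
    (h1 : 5 ≤ μ 1 + μ 2) (h2 : 4 ≤ μ 0 + μ 2) : monomial μ r ∈ auxS k := by
  set c := min (μ 2) 5 with hcdef
  have hc : c ≤ 5 := min_le_right _ _
  have hc2 : c ≤ μ 2 := min_le_left _ _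
  have hcor : c = μ 2 ∨ c = 5 := min_choice _ _
  have e0 : auxExp c 0 = 4 - c := by simp [auxExp, Finsupp.single_apply, Fin.ext_iff]
  have e1 : auxExp c 1 = 5 - c := by simp [auxExp, Finsupp.single_apply, Fin.ext_iff]
  have e2 : auxExp c 2 = c := by simp [auxExp, Finsupp.single_apply, Fin.ext_iff]
  have hle : auxExp c ≤ μ := by
    rw [Finsupp.le_def]
    intro i
    fin_cases i
    · show auxExp c 0 ≤ μ 0; omega
    · show auxExp c 1 ≤ μ 1; omega
    · show auxExp c 2 ≤ μ 2; omega
  have heq : monomial μ r = monomial (μ - auxExp c) r * monomial (auxExp c) 1 := by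
    rw [monomial_mul, mul_one, tsub_add_cancel_of_le hle]
  rw [heq]
  exact Ideal.mul_mem_left _ _ (auxExp_mem c hc)

private lemma aux_mem_J4 {k : Type*} [Field k] (m n : ℕ) (h : m + n = 4) :
    ((X 0 * X 1) ^ m * X 2 ^ n : MvPolynomial (Fin 3) k) ∈
      (Ideal.span {X 0 * X 1, X 2} : Ideal (MvPolynomial (Fin 3) k)) ^ 4 := by
  have hxy : (X 0 * X 1 : MvPolynomial (Fin 3) k) ∈ Ideal.span {X 0 * X 1, X 2} :=
    Ideal.subset_span (Set.mem_insert _ _)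
  have hz : (X 2 : MvPolynomial (Fin 3) k) ∈ Ideal.span {X 0 * X 1, X 2} :=
    Ideal.subset_span (Set.mem_insert_of_mem _ rfl)
  rw [← h, pow_add]
  exact Ideal.mul_mem_mul (Ideal.pow_mem_pow hxy m) (Ideal.pow_mem_pow hz n)

private lemma aux_S_le_B {k : Type*} [Field k] :
    auxS k ≤ (Ideal.span {X 0 * X 1, X 2} : Ideal (MvPolynomial (Fin 3) k)) ^ 4 *
      Ideal.span {X 1, X 2} := by
  have hy : (X 1 : MvPolynomial (Fin 3) k) ∈ Ideal.span {X 1, X 2} :=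
    Ideal.subset_span (Set.mem_insert _ _)
  have hz : (X 2 : MvPolynomial (Fin 3) k) ∈ Ideal.span {X 1, X 2} :=
    Ideal.subset_span (Set.mem_insert_of_mem _ rfl)
  rw [auxS, Ideal.span_le]
  rintro g (rfl | rfl | rfl | rfl | rfl | rfl)
  · have h := Ideal.mul_mem_mul (aux_mem_J4 4 0 (by norm_num)) hy
    rwa [show ((X 0 * X 1) ^ 4 * X 2 ^ 0 * X 1 : MvPolynomial (Fin 3) k) =
      X 0 ^ 4 * X 1 ^ 5 * X 2 ^ 0 from by ring] at h
  · have h := Ideal.mul_mem_mul (aux_mem_J4 3 1 (by norm_num)) hy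
    rwa [show ((X 0 * X 1) ^ 3 * X 2 ^ 1 * X 1 : MvPolynomial (Fin 3) k) =
      X 0 ^ 3 * X 1 ^ 4 * X 2 ^ 1 from by ring] at h
  · have h := Ideal.mul_mem_mul (aux_mem_J4 2 2 (by norm_num)) hy
    rwa [show ((X 0 * X 1) ^ 2 * X 2 ^ 2 * X 1 : MvPolynomial (Fin 3) k) =
      X 0 ^ 2 * X 1 ^ 3 * X 2 ^ 2 from by ring] at h
  · have h := Ideal.mul_mem_mul (aux_mem_J4 1 3 (by norm_num)) hy
    rwa [show ((X 0 * X 1) ^ 1 * X 2 ^ 3 * X 1 : MvPolynomial (Fin 3) k) =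
      X 0 ^ 1 * X 1 ^ 2 * X 2 ^ 3 from by ring] at h
  · have h := Ideal.mul_mem_mul (aux_mem_J4 0 4 (by norm_num)) hy
    rwa [show ((X 0 * X 1) ^ 0 * X 2 ^ 4 * X 1 : MvPolynomial (Fin 3) k) =
      X 0 ^ 0 * X 1 ^ 1 * X 2 ^ 4 from by ring] at h
  · have h := Ideal.mul_mem_mul (aux_mem_J4 0 4 (by norm_num)) hz
    rwa [show ((X 0 * X 1) ^ 0 * X 2 ^ 4 * X 2 : MvPolynomial (Fin 3) k) =
      X 0 ^ 0 * X 1 ^ 0 * X 2 ^ 5 from by ring] at h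

private lemma aux_B_le_S {k : Type*} [Field k] :
    (Ideal.span {X 0 * X 1, X 2} : Ideal (MvPolynomial (Fin 3) k)) ^ 4 *
      Ideal.span {X 1, X 2} ≤ auxS k := by
  refine le_trans (Ideal.mul_mono (aux_span_pair_pow_le (X 0 * X 1) (X 2) 4) le_rfl) ?_
  rw [Ideal.span_mul_span]
  refine Ideal.span_le.mpr ?_
  intro x hx
  simp only [Set.mem_mul] at hx
  obtain ⟨s, ⟨m, hm, rfl⟩, t, ht, rfl⟩ := hx
  have pick : ∀ g : MvPolynomial (Fin 3) k, (g ∈ ({X 0 ^ 4 * X 1 ^ 5 * X 2 ^ 0,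
      X 0 ^ 3 * X 1 ^ 4 * X 2 ^ 1, X 0 ^ 2 * X 1 ^ 3 * X 2 ^ 2, X 0 ^ 1 * X 1 ^ 2 * X 2 ^ 3,
      X 0 ^ 0 * X 1 ^ 1 * X 2 ^ 4, X 0 ^ 0 * X 1 ^ 0 * X 2 ^ 5} :
        Set (MvPolynomial (Fin 3) k))) → g ∈ auxS k := fun g hg => Ideal.subset_span hg
  rcases ht with rfl | rfl <;> interval_cases m
  · refine pick _ ?_
    simp only [Set.mem_insert_iff, Set.mem_singleton_iff]
    exact Or.inr (Or.inr (Or.inr (Or.inr (Or.inl (by ring)))))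
  · refine pick _ ?_
    simp only [Set.mem_insert_iff, Set.mem_singleton_iff]
    exact Or.inr (Or.inr (Or.inr (Or.inl (by ring))))
  · refine pick _ ?_
    simp only [Set.mem_insert_iff, Set.mem_singleton_iff]
    exact Or.inr (Or.inr (Or.inl (by ring)))
  · refine pick _ ?_
    simp only [Set.mem_insert_iff, Set.mem_singleton_iff]
    exact Or.inr (Or.inl (by ring))
  · refine pick _ ?_
    simp only [Set.mem_insert_iff, Set.mem_singleton_iff]
    exact Or.inl (by ring)
  · refine pick _ ?_
    simp only [Set.mem_insert_iff, Set.mem_singleton_iff]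
    exact Or.inr (Or.inr (Or.inr (Or.inr (Or.inr (by ring)))))
  · have h : (X 0 ^ 0 * X 1 ^ 1 * X 2 ^ 4 : MvPolynomial (Fin 3) k) ∈ auxS k :=
      Ideal.subset_span (by right; right; right; right; left; rfl)
    have h2 := Ideal.mul_mem_left _ (X 0) h
    rwa [show (X 0 * (X 0 ^ 0 * X 1 ^ 1 * X 2 ^ 4) : MvPolynomial (Fin 3) k) =
      (X 0 * X 1) ^ 1 * X 2 ^ (4 - 1) * X 2 from by ring] at h2
  · have h : (X 0 ^ 1 * X 1 ^ 2 * X 2 ^ 3 : MvPolynomial (Fin 3) k) ∈ auxS k :=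
      Ideal.subset_span (by right; right; right; left; rfl)
    have h2 := Ideal.mul_mem_left _ (X 0) h
    rwa [show (X 0 * (X 0 ^ 1 * X 1 ^ 2 * X 2 ^ 3) : MvPolynomial (Fin 3) k) =
      (X 0 * X 1) ^ 2 * X 2 ^ (4 - 2) * X 2 from by ring] at h2
  · have h : (X 0 ^ 2 * X 1 ^ 3 * X 2 ^ 2 : MvPolynomial (Fin 3) k) ∈ auxS k :=
      Ideal.subset_span (by right; right; left; rfl)
    have h2 := Ideal.mul_mem_left _ (X 0) h
    rwa [show (X 0 * (X 0 ^ 2 * X 1 ^ 3 * X 2 ^ 2) : MvPolynomial (Fin 3) k) =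
      (X 0 * X 1) ^ 3 * X 2 ^ (4 - 3) * X 2 from by ring] at h2
  · have h : (X 0 ^ 3 * X 1 ^ 4 * X 2 ^ 1 : MvPolynomial (Fin 3) k) ∈ auxS k :=
      Ideal.subset_span (by right; left; rfl)
    have h2 := Ideal.mul_mem_left _ (X 0) h
    rwa [show (X 0 * (X 0 ^ 3 * X 1 ^ 4 * X 2 ^ 1) : MvPolynomial (Fin 3) k) =
      (X 0 * X 1) ^ 4 * X 2 ^ (4 - 4) * X 2 from by ring] at h2

private lemma aux_left_le_S {k : Type*} [Field k] :
    ((Ideal.span {X 1, X 2} : Ideal (MvPolynomial (Fin 3) k)) ^ 5 ⊓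
        Ideal.span {X 0, X 2} ^ 4) ≤ auxS k := by
  intro f hf
  obtain ⟨hP, hQ⟩ := hf
  have vP := aux_vanish 1 2 (by decide) 5 f hP
  have vQ := aux_vanish 0 2 (by decide) 4 f hQ
  rw [as_sum f]
  refine Ideal.sum_mem _ fun v hv => ?_
  have hcv : coeff v f ≠ 0 := mem_support_iff.mp hv
  refine aux_mono_mem v _ ?_ ?_
  · by_contra h; exact hcv (vP v (by omega))
  · by_contra h; exact hcv (vQ v (by omega))

/-- In `k[x₁,x₂,x₃]`: `(x₂,x₃)⁵ ∩ (x₁,x₃)⁴ = (x₁x₂, x₃)⁴·(x₂,x₃)`. -/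
theorem stmt_2 (k : Type*) [Field k] :
    ((Ideal.span {X 1, X 2} : Ideal (MvPolynomial (Fin 3) k)) ^ 5 ⊓
        Ideal.span {X 0, X 2} ^ 4) =
      Ideal.span {X 0 * X 1, X 2} ^ 4 * Ideal.span {X 1, X 2} := by
  refine le_antisymm (le_trans aux_left_le_S aux_S_le_B) (le_inf ?_ ?_)
  · have hsub : (Ideal.span {X 0 * X 1, X 2} : Ideal (MvPolynomial (Fin 3) k)) ≤
        Ideal.span {X 1, X 2} := by
      rw [Ideal.span_le]
      rintro g (rfl | rfl)
      · exact Ideal.mul_mem_left _ _ (Ideal.subset_span (Set.mem_insert _ _))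
      · exact Ideal.subset_span (Set.mem_insert_of_mem _ rfl)
    have h5 : (Ideal.span {X 1, X 2} : Ideal (MvPolynomial (Fin 3) k)) ^ 5 =
        Ideal.span {X 1, X 2} ^ 4 * Ideal.span {X 1, X 2} := by
      rw [← pow_succ]
    rw [h5]
    exact Ideal.mul_mono (Ideal.pow_right_mono hsub 4) le_rfl
  · have hsub : (Ideal.span {X 0 * X 1, X 2} : Ideal (MvPolynomial (Fin 3) k)) ≤
        Ideal.span {X 0, X 2} := by
      rw [Ideal.span_le]
      rintro g (rfl | rfl)
      · exact Ideal.mul_mem_right _ _ (Ideal.subset_span (Set.mem_insert _ _))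
      · exact Ideal.subset_span (Set.mem_insert_of_mem _ rfl)
    exact le_trans Ideal.mul_le_left (Ideal.pow_right_mono hsub 4)
end

section
/- In k[x,y,u,v], the ideal generated by xu − yv, xv − yu, yu − yv is a radical ideal, and it equals the intersection of the three prime ideals (u,v), (x,y), and (x−y, u−v). -/
open MvPolynomial

private lemma span_eq_ker {k : Type*} [Field k] (S : Set (MvPolynomial (Fin 4) k))
    (σ : MvPolynomial (Fin 4) k →ₐ[k] MvPolynomial (Fin 4) k)
    (h1 : ∀ s ∈ S, σ s = 0)
    (h2 : ∀ i, Ideal.Quotient.mk (Ideal.span S) (σ (X i)) =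
      Ideal.Quotient.mk (Ideal.span S) (X i)) :
    Ideal.span S = RingHom.ker (σ : MvPolynomial (Fin 4) k →+* MvPolynomial (Fin 4) k) := by
  apply le_antisymm
  · rw [Ideal.span_le]
    intro s hs
    exact RingHom.mem_ker.mpr (h1 s hs)
  · intro f hf
    have key : (Ideal.Quotient.mkₐ k (Ideal.span S)).comp σ = Ideal.Quotient.mkₐ k (Ideal.span S) :=
      MvPolynomial.algHom_ext fun i => by simpa using h2 i
    have hf0 : σ f = 0 := RingHom.mem_ker.mp hf
    have := congrArg (fun g : MvPolynomial (Fin 4) k →ₐ[k]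
        MvPolynomial (Fin 4) k ⧸ Ideal.span S => g f) key
    simp only [AlgHom.comp_apply, Ideal.Quotient.mkₐ_eq_mk, hf0, map_zero] at this
    exact (Ideal.Quotient.eq_zero_iff_mem).mp this.symm

/-- In `k[x,y,u,v]` (with `x = X 0`, `y = X 1`, `u = X 2`, `v = X 3`),
the ideal `(xu − yv, xv − yu, yu − yv)` is radical and equals
`(u,v) ∩ (x,y) ∩ (x−y, u−v)`. -/
theorem stmt_5 (k : Type*) [Field k] :
    (Ideal.span {X 0 * X 2 - X 1 * X 3, X 0 * X 3 - X 1 * X 2,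
        X 1 * X 2 - X 1 * X 3} : Ideal (MvPolynomial (Fin 4) k)).IsRadical ∧
    (Ideal.span {X 0 * X 2 - X 1 * X 3, X 0 * X 3 - X 1 * X 2,
        X 1 * X 2 - X 1 * X 3} : Ideal (MvPolynomial (Fin 4) k)) =
      Ideal.span {X 2, X 3} ⊓ Ideal.span {X 0, X 1} ⊓
        Ideal.span {X 0 - X 1, X 2 - X 3} := by
  set I : Ideal (MvPolynomial (Fin 4) k) := Ideal.span {X 0 * X 2 - X 1 * X 3, X 0 * X 3 - X 1 * X 2,
      X 1 * X 2 - X 1 * X 3} with hI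
  set P1 : Ideal (MvPolynomial (Fin 4) k) := Ideal.span {X 2, X 3} with hP1
  set P2 : Ideal (MvPolynomial (Fin 4) k) := Ideal.span {X 0, X 1} with hP2
  set P3 : Ideal (MvPolynomial (Fin 4) k) := Ideal.span {X 0 - X 1, X 2 - X 3} with hP3
  -- generators of I
  have hg1 : (X 0 * X 2 - X 1 * X 3 : MvPolynomial (Fin 4) k) ∈ I := Ideal.subset_span (by simp)
  have hg2 : (X 0 * X 3 - X 1 * X 2 : MvPolynomial (Fin 4) k) ∈ I := Ideal.subset_span (by simp)
  have hg3 : (X 1 * X 2 - X 1 * X 3 : MvPolynomial (Fin 4) k) ∈ I := Ideal.subset_span (by simp)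
  -- the three ideals are kernels of evaluation maps, hence prime
  have hker1 : P1 = RingHom.ker ((aeval ![X 0, X 1, 0, 0] : MvPolynomial (Fin 4) k →ₐ[k] MvPolynomial (Fin 4) k) : MvPolynomial (Fin 4) k →+* MvPolynomial (Fin 4) k) := by
    apply span_eq_ker
    · rintro s (rfl | rfl) <;> simp
    · intro i
      fin_cases i <;> simp <;>
        exact (Ideal.Quotient.eq_zero_iff_mem).mpr (Ideal.subset_span (by simp)) |>.symm
  have hker2 : P2 = RingHom.ker ((aeval ![0, 0, X 2, X 3] : MvPolynomial (Fin 4) k →ₐ[k] MvPolynomial (Fin 4) k) : MvPolynomial (Fin 4) k →+* MvPolynomial (Fin 4) k) := by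
    apply span_eq_ker
    · rintro s (rfl | rfl) <;> simp
    · intro i
      fin_cases i <;> simp <;>
        exact (Ideal.Quotient.eq_zero_iff_mem).mpr (Ideal.subset_span (by simp)) |>.symm
  have hker3 : P3 = RingHom.ker ((aeval ![X 1, X 1, X 3, X 3] : MvPolynomial (Fin 4) k →ₐ[k] MvPolynomial (Fin 4) k) : MvPolynomial (Fin 4) k →+* MvPolynomial (Fin 4) k) := by
    apply span_eq_ker
    · rintro s (rfl | rfl) <;> simp
    · intro i
      fin_cases i <;> simp <;> rw [Ideal.Quotient.eq]
      · have h : (X 0 - X 1 : MvPolynomial (Fin 4) k) ∈ Ideal.span ({X 0 - X 1, X 2 - X 3} : Set (MvPolynomial (Fin 4) k)) :=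
          Ideal.subset_span (Set.mem_insert _ _)
        simpa using neg_mem h
      · have h : (X 2 - X 3 : MvPolynomial (Fin 4) k) ∈ Ideal.span ({X 0 - X 1, X 2 - X 3} : Set (MvPolynomial (Fin 4) k)) :=
          Ideal.subset_span (Set.mem_insert_of_mem _ rfl)
        simpa using neg_mem h
  have hp1 : P1.IsPrime := by rw [hker1]; exact RingHom.ker_isPrime _
  have hp2 : P2.IsPrime := by rw [hker2]; exact RingHom.ker_isPrime _
  have hp3 : P3.IsPrime := by rw [hker3]; exact RingHom.ker_isPrime _
  have hxu : (X 0 * X 2 : MvPolynomial (Fin 4) k) ∉ P3 := by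
    rw [hker3, RingHom.mem_ker]
    have hev : ((aeval ![X 1, X 1, X 3, X 3] : MvPolynomial (Fin 4) k →ₐ[k] MvPolynomial (Fin 4) k) : MvPolynomial (Fin 4) k →+* MvPolynomial (Fin 4) k) (X 0 * X 2) =
        X 1 * X 3 := by
      simp
    rw [hev]
    exact mul_ne_zero (X_ne_zero _) (X_ne_zero _)
  -- I ≤ P1 ⊓ P2 ⊓ P3
  have hle : I ≤ P1 ⊓ P2 ⊓ P3 := by
    rw [hI, Ideal.span_le]
    rintro g hg
    simp only [Set.mem_insert_iff, Set.mem_singleton_iff] at hg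
    refine Submodule.mem_inf.mpr ⟨Submodule.mem_inf.mpr ⟨?_, ?_⟩, ?_⟩ <;>
      rw [Ideal.mem_span_pair] <;>
      rcases hg with rfl | rfl | rfl
    · exact ⟨X 0, -X 1, by ring⟩
    · exact ⟨-(X 1), X 0, by ring⟩
    · exact ⟨X 1, -X 1, by ring⟩
    · exact ⟨X 2, -X 3, by ring⟩
    · exact ⟨X 3, -X 2, by ring⟩
    · exact ⟨0, X 2 - X 3, by ring⟩
    · exact ⟨X 2, X 1, by ring⟩
    · exact ⟨X 3, -X 1, by ring⟩
    · exact ⟨0, X 1, by ring⟩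
  -- K = I ⊔ (x*u); all products X j * X i (j ∈ {0,1}, i ∈ {2,3}) lie in K
  set K : Ideal (MvPolynomial (Fin 4) k) := I ⊔ Ideal.span {X 0 * X 2} with hK
  have hxuK : (X 0 * X 2 : MvPolynomial (Fin 4) k) ∈ K :=
    Ideal.mem_sup_right (Ideal.subset_span rfl)
  have hIK : I ≤ K := le_sup_left
  have hprod : ∀ j ∈ ({0, 1} : Set (Fin 4)), ∀ i ∈ ({2, 3} : Set (Fin 4)),
      (X j * X i : MvPolynomial (Fin 4) k) ∈ K := by
    rintro j (rfl | rfl) i (rfl | rfl)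
    · exact hxuK
    · have h : (X 0 * X 3 : MvPolynomial (Fin 4) k) = X 0 * X 2 -
          ((X 0 * X 2 - X 1 * X 3) - (X 0 * X 3 - X 1 * X 2) - (X 1 * X 2 - X 1 * X 3)) := by ring
      rw [h]
      exact sub_mem hxuK (hIK (sub_mem (sub_mem hg1 hg2) hg3))
    · have h : (X 1 * X 2 : MvPolynomial (Fin 4) k) = X 0 * X 2 -
          ((X 0 * X 2 - X 1 * X 3) - (X 1 * X 2 - X 1 * X 3)) := by ring
      rw [h]
      exact sub_mem hxuK (hIK (sub_mem hg1 hg3))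
    · have h : (X 1 * X 3 : MvPolynomial (Fin 4) k) = X 0 * X 2 - (X 0 * X 2 - X 1 * X 3) := by ring
      rw [h]
      exact sub_mem hxuK (hIK hg1)
  -- P1 ⊓ P2 ≤ K
  have hclaim : P1 ⊓ P2 ≤ K := by
    intro f hf
    obtain ⟨hf1, hf2⟩ := Submodule.mem_inf.mp hf
    have himg1 : ({X 2, X 3} : Set (MvPolynomial (Fin 4) k)) = X '' {2, 3} := by
      simp [Set.image_insert_eq]
    have himg2 : ({X 0, X 1} : Set (MvPolynomial (Fin 4) k)) = X '' {0, 1} := by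
      simp [Set.image_insert_eq]
    rw [hP1, himg1, mem_ideal_span_X_image] at hf1
    rw [hP2, himg2, mem_ideal_span_X_image] at hf2
    have hfs : f = ∑ m ∈ f.support, monomial m (coeff m f) := (as_sum f)
    rw [hfs]
    refine Ideal.sum_mem _ fun m hm => ?_
    obtain ⟨i, hi, hmi⟩ := hf1 m hm
    obtain ⟨j, hj, hmj⟩ := hf2 m hm
    have hij : j ≠ i := by
      rcases hj with rfl | rfl <;> rcases hi with rfl | rfl <;> decide
    have hdecomp : monomial m (coeff m f) =
        X j * X i * monomial (m - Finsupp.single j 1 - Finsupp.single i 1) (coeff m f) := by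
      have hm : (Finsupp.single j 1 + Finsupp.single i 1) +
          (m - Finsupp.single j 1 - Finsupp.single i 1) = m := by
        ext a
        simp only [Finsupp.add_apply, Finsupp.tsub_apply, Finsupp.single_apply]
        split_ifs with h1 h2 h3
        · exact absurd (h1.trans h2.symm) hij
        · subst h1; omega
        · subst h3; omega
        · omega
      rw [X, X, monomial_mul, monomial_mul, one_mul, one_mul, hm]
    rw [hdecomp]
    exact Ideal.mul_mem_right _ _ (hprod j hj i hi)
  -- reverse inclusion
  have hge : P1 ⊓ P2 ⊓ P3 ≤ I := by
    intro f hf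
    obtain ⟨hf12, hf3⟩ := Submodule.mem_inf.mp hf
    obtain ⟨a, ha, b, hb, hab⟩ := Submodule.mem_sup.mp (hclaim hf12)
    obtain ⟨g, hg⟩ := Ideal.mem_span_singleton.mp hb
    have hIP3 : I ≤ P3 := hle.trans (inf_le_right)
    have hbP3 : b ∈ P3 := by
      have : b = f - a := by rw [← hab]; ring
      rw [this]
      exact sub_mem hf3 (hIP3 ha)
    rw [hg] at hbP3
    have hgP3 : g ∈ P3 := (hp3.mem_or_mem hbP3).resolve_left hxu
    obtain ⟨p, q, hpq⟩ := Ideal.mem_span_pair.mp hgP3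
    have hbI : b ∈ I := by
      have hb' : b = (p * X 0) * ((X 0 * X 2 - X 1 * X 3) - (X 1 * X 2 - X 1 * X 3)) +
          (q * X 2) * ((X 0 * X 2 - X 1 * X 3) - (X 0 * X 3 - X 1 * X 2) -
            (X 1 * X 2 - X 1 * X 3)) := by
        rw [hg, ← hpq]; ring
      rw [hb']
      exact add_mem (Ideal.mul_mem_left _ _ (sub_mem hg1 hg3))
        (Ideal.mul_mem_left _ _ (sub_mem (sub_mem hg1 hg2) hg3))
    rw [← hab]
    exact add_mem ha hbI
  have heq : I = P1 ⊓ P2 ⊓ P3 := le_antisymm hle hge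
  refine ⟨?_, heq⟩
  rw [heq]
  exact le_inf (le_inf ((Ideal.radical_mono (inf_le_left.trans inf_le_left)).trans hp1.isRadical)
      ((Ideal.radical_mono (inf_le_left.trans inf_le_right)).trans hp2.isRadical))
    ((Ideal.radical_mono inf_le_right).trans hp3.isRadical)
end

section
/- If φ ∈ k[s,x,y,z] can be written both as φ = a·x + b·y and as φ = c·(x−s) + d·z for some a,b,c,d ∈ k[s,x,y,z], then φ belongs to the square of the maximal ideal (s,x,y,z). -/
open MvPolynomial

/-- If `φ ∈ k[s,x,y,z]` can be written both as `a·x + b·y` and as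
`c·(x−s) + d·z`, then `φ` lies in the square of the maximal ideal
`(s,x,y,z)` (here `s = X 0`, `x = X 1`, `y = X 2`, `z = X 3`). -/
theorem stmt_9 (k : Type*) [Field k] (φ a b c d : MvPolynomial (Fin 4) k)
    (h1 : φ = a * X 1 + b * X 2) (h2 : φ = c * (X 1 - X 0) + d * X 3) :
    φ ∈ (Ideal.span {X 0, X 1, X 2, X 3} : Ideal (MvPolynomial (Fin 4) k)) ^ 2 := by
  set I : Ideal (MvPolynomial (Fin 4) k) := Ideal.span {X 0, X 1, X 2, X 3} with hI
  have hX : ∀ i : Fin 4, (X i : MvPolynomial (Fin 4) k) ∈ I := by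
    intro i; fin_cases i <;> exact Ideal.subset_span (by simp)
  have hset : ({X 0, X 1, X 2, X 3} : Set (MvPolynomial (Fin 4) k))
      = X '' (Set.univ : Set (Fin 4)) := by
    ext q
    constructor
    · rintro (rfl | rfl | rfl | rfl) <;> exact ⟨_, Set.mem_univ _, rfl⟩
    · rintro ⟨i, -, rfl⟩
      fin_cases i <;> simp
  have hmem : ∀ p : MvPolynomial (Fin 4) k, coeff 0 p = 0 → p ∈ I := by
    intro p hp
    rw [hI, hset, mem_ideal_span_X_image]
    intro m hm
    have hm0 : m ≠ 0 := by
      rintro rfl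
      exact (mem_support_iff.mp hm) hp
    obtain ⟨i, hi⟩ := Finsupp.ne_iff.mp hm0
    exact ⟨i, Set.mem_univ _, by simpa using hi⟩
  have e : a * X 1 + b * X 2 = c * X 1 - c * X 0 + d * X 3 := by
    rw [← h1, h2]; ring
  have key : ∀ j : Fin 4, coeff (Finsupp.single j 1) (a * X 1 + b * X 2)
      = coeff (Finsupp.single j 1) (c * X 1 - c * X 0 + d * X 3) := fun j => by rw [e]
  have hsupp : ∀ i j : Fin 4, i ∈ (Finsupp.single j 1 : Fin 4 →₀ ℕ).support ↔ i = j := by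
    intro i j
    rcases eq_or_ne i j with rfl | h
    · simp [Finsupp.single_apply]
    · simp [Finsupp.single_apply, h, Ne.symm h]
  have hc0 : coeff 0 c = 0 := by
    have := key 0
    simp [coeff_mul_X', hsupp, tsub_self] at this
    exact this
  have ha0 : coeff 0 a = 0 := by
    have := key 1
    simp [coeff_mul_X', hsupp, tsub_self] at this
    rw [this]
    simpa using hc0
  have hb0 : coeff 0 b = 0 := by
    have := key 2
    simp [coeff_mul_X', hsupp, tsub_self] at this
    simpa using this
  rw [h1, sq]
  exact Ideal.add_mem _ (Ideal.mul_mem_mul (hmem a ha0) (hX 1))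
    (Ideal.mul_mem_mul (hmem b hb0) (hX 2))
end

section
/- In k[s,x,y,z], the ideal I = (y(x−s), xz, yz) equals the intersection (x,y) ∩ (y,z) ∩ (x−s, z) of the ideals of three 2-planes. -/
open MvPolynomial

lemma pair_le {i j : Fin 4} (hij : i ≠ j) (m : Fin 4 →₀ ℕ) :
    Finsupp.single i 1 + Finsupp.single j 1 ≤ m ↔ 1 ≤ m i ∧ 1 ≤ m j := by
  rw [Finsupp.le_def]
  constructor
  · intro h
    refine ⟨(h i).trans' ?_, (h j).trans' ?_⟩ <;>
      simp [Finsupp.single_apply, hij, hij.symm]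
  · rintro ⟨h1, h2⟩ a
    rcases eq_or_ne a i with rfl | hai
    · simpa [Finsupp.single_apply, hij.symm] using h1
    rcases eq_or_ne a j with rfl | haj
    · simpa [Finsupp.single_apply, hij] using h2
    · simp [Finsupp.single_apply, hai.symm, haj.symm]

lemma mono_case (k : Type*) [Field k] :
    (Ideal.span {X 2 * X 0, X 1 * X 3, X 2 * X 3} :
        Ideal (MvPolynomial (Fin 4) k)) =
      Ideal.span {X 1, X 2} ⊓ Ideal.span {X 2, X 3} ⊓
        Ideal.span {X 0, X 3} := by
  have hXX : ∀ i j : Fin 4, (X i * X j : MvPolynomial (Fin 4) k)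
      = monomial (Finsupp.single i 1 + Finsupp.single j 1) 1 := by
    intro i j; rw [X, X, monomial_mul, one_mul]
  have him : ({X 2 * X 0, X 1 * X 3, X 2 * X 3} : Set (MvPolynomial (Fin 4) k))
      = (fun s => monomial s (1:k)) ''
        {Finsupp.single (2:Fin 4) 1 + Finsupp.single (0:Fin 4) 1,
         Finsupp.single (1:Fin 4) 1 + Finsupp.single (3:Fin 4) 1,
         Finsupp.single (2:Fin 4) 1 + Finsupp.single (3:Fin 4) 1} := by
    simp only [Set.image_insert_eq, Set.image_singleton, hXX]
  have hp : ∀ i j : Fin 4, ({X i, X j} : Set (MvPolynomial (Fin 4) k))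
      = X '' {i, j} := by
    intro i j; simp [Set.image_insert_eq]
  ext p
  rw [him, Ideal.mem_inf, Ideal.mem_inf, hp, hp, hp,
    mem_ideal_span_monomial_image, mem_ideal_span_X_image,
    mem_ideal_span_X_image, mem_ideal_span_X_image]
  constructor
  · intro h
    refine ⟨⟨fun m hm => ?_, fun m hm => ?_⟩, fun m hm => ?_⟩ <;>
    · obtain ⟨si, hsi, hle⟩ := h m hm
      simp only [Set.mem_insert_iff, Set.mem_singleton_iff] at hsi
      rcases hsi with rfl | rfl | rfl <;>
        rw [pair_le (by decide)] at hle <;>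
        · obtain ⟨h1, h2⟩ := hle
          simp only [Set.mem_insert_iff, Set.mem_singleton_iff]
          first
            | exact ⟨_, Or.inl rfl, by omega⟩
            | exact ⟨_, Or.inr rfl, by omega⟩
  · rintro ⟨⟨h1, h2⟩, h3⟩ m hm
    obtain ⟨i1, hi1, hv1⟩ := h1 m hm
    obtain ⟨i2, hi2, hv2⟩ := h2 m hm
    obtain ⟨i3, hi3, hv3⟩ := h3 m hm
    simp only [Set.mem_insert_iff, Set.mem_singleton_iff] at hi1 hi2 hi3 ⊢
    rcases hi1 with rfl | rfl <;> rcases hi2 with rfl | rfl <;>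
      rcases hi3 with rfl | rfl <;>
      [skip; skip; skip; skip; skip; skip; skip; skip] <;>
      first
        | exact ⟨_, Or.inl rfl, by rw [pair_le (by decide)]; omega⟩
        | exact ⟨_, Or.inr (Or.inl rfl), by rw [pair_le (by decide)]; omega⟩
        | exact ⟨_, Or.inr (Or.inr rfl), by rw [pair_le (by decide)]; omega⟩

noncomputable def sigma' (k : Type*) [CommRing k] :
    MvPolynomial (Fin 4) k ≃ₐ[k] MvPolynomial (Fin 4) k :=
  AlgEquiv.ofAlgHom (aeval ![X 1 - X 0, X 1, X 2, X 3])
    (aeval ![X 1 - X 0, X 1, X 2, X 3])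
    (by apply MvPolynomial.algHom_ext; intro i; fin_cases i <;> simp)
    (by apply MvPolynomial.algHom_ext; intro i; fin_cases i <;> simp)

/-- In `k[s,x,y,z]` (with `s = X 0`, `x = X 1`, `y = X 2`, `z = X 3`),
the ideal `(y(x−s), xz, yz)` equals `(x,y) ∩ (y,z) ∩ (x−s,z)`. -/
theorem stmt_12 (k : Type*) [Field k] :
    (Ideal.span {X 2 * (X 1 - X 0), X 1 * X 3, X 2 * X 3} :
        Ideal (MvPolynomial (Fin 4) k)) =
      Ideal.span {X 1, X 2} ⊓ Ideal.span {X 2, X 3} ⊓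
        Ideal.span {X 1 - X 0, X 3} := by
  let e : MvPolynomial (Fin 4) k ≃+* MvPolynomial (Fin 4) k := (sigma' k).toRingEquiv
  have h0 : e (X 0) = X 1 - X 0 := by simp [e, sigma']
  have h1 : e (X 1) = X 1 := by simp [e, sigma']
  have h2 : e (X 2) = X 2 := by simp [e, sigma']
  have h3 : e (X 3) = X 3 := by simp [e, sigma']
  have key := congrArg (Ideal.map (e : MvPolynomial (Fin 4) k →+* MvPolynomial (Fin 4) k)) (mono_case k)
  rw [Ideal.map_span, Ideal.map_comap_of_equiv, Ideal.comap_inf, Ideal.comap_inf,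
      Ideal.comap_symm, Ideal.comap_symm, Ideal.comap_symm,
      Ideal.map_span, Ideal.map_span, Ideal.map_span] at key
  simpa [Set.image_insert_eq, Set.image_singleton, map_mul, h0, h1, h2, h3] using key
end

section
/- Let R be a commutative ring and f₁, f₂, f₃, f₄ a regular sequence in R. If φ ∈ R satisfies φ ∈ (f₁, f₂) ∩ (f₃, f₄), then φ ∈ (f₁f₃, f₁f₄, f₂f₃, f₂f₄) + ((f₁,f₂)·(f₃,f₄)); equivalently, (f₁,f₂) ∩ (f₃,f₄) = (f₁,f₂)·(f₃,f₄). -/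
open RingTheory.Sequence

lemma reg_mod_aux {R : Type*} [CommRing R] (I : Ideal R) (f : R)
    (h : IsSMulRegular (R ⧸ (I • ⊤ : Submodule R R)) f) {a : R} (ha : f * a ∈ I) :
    a ∈ I := by
  have hIt : (I • ⊤ : Submodule R R) = I := by
    rw [smul_eq_mul, Ideal.mul_top]
  have h1 : f • (Submodule.Quotient.mk a : R ⧸ (I • ⊤ : Submodule R R)) = f • 0 := by
    rw [smul_zero, ← Submodule.Quotient.mk_smul,
      Submodule.Quotient.mk_eq_zero, hIt, smul_eq_mul]
    exact ha
  have h2 := h h1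
  rwa [Submodule.Quotient.mk_eq_zero, hIt] at h2

/-- If `f₁, f₂, f₃, f₄` is a regular sequence in a commutative ring `R`,
then `(f₁,f₂) ∩ (f₃,f₄) = (f₁,f₂)·(f₃,f₄)`. -/
theorem stmt_16 (R : Type*) [CommRing R] (f₁ f₂ f₃ f₄ : R)
    (hreg : RingTheory.Sequence.IsRegular R [f₁, f₂, f₃, f₄]) :
    (Ideal.span {f₁, f₂} ⊓ Ideal.span {f₃, f₄} : Ideal R) =
      Ideal.span {f₁, f₂} * Ideal.span {f₃, f₄} := by
  refine le_antisymm ?_ Ideal.mul_le_inf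
  have hw := hreg.toIsWeaklyRegular.regular_mod_prev
  -- f₃ regular mod (f₁, f₂)
  have h3 := hw 2 (by norm_num)
  have h4 := hw 3 (by norm_num)
  simp only [List.take, List.getElem_cons_succ, List.getElem_cons_zero] at h3 h4
  have hset2 : (Ideal.ofList [f₁, f₂] : Ideal R) = Ideal.span {f₁, f₂} := by
    rw [Ideal.ofList_cons, Ideal.ofList_singleton, Ideal.span_insert]
  have hset3 : (Ideal.ofList [f₁, f₂, f₃] : Ideal R) = Ideal.span {f₁, f₂, f₃} := by
    rw [Ideal.ofList_cons, Ideal.ofList_cons, Ideal.ofList_singleton,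
      Ideal.span_insert, Ideal.span_insert]
  replace h3 : IsSMulRegular (R ⧸ (Ideal.span {f₁, f₂} • ⊤ : Submodule R R)) f₃ := by
    rw [← hset2]; exact h3
  replace h4 : IsSMulRegular (R ⧸ (Ideal.span {f₁, f₂, f₃} • ⊤ : Submodule R R)) f₄ := by
    rw [← hset3]; exact h4
  intro φ hφ
  obtain ⟨h12, h34⟩ := hφ
  obtain ⟨a, b, hab⟩ := Ideal.mem_span_pair.mp h12
  obtain ⟨c, d, hcd⟩ := Ideal.mem_span_pair.mp h34
  -- d * f₄ ∈ (f₁, f₂, f₃)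
  have hd4 : f₄ * d ∈ Ideal.span ({f₁, f₂, f₃} : Set R) := by
    have hmem : ∀ x ∈ ({f₁, f₂, f₃} : Set R), x ∈ Ideal.span ({f₁, f₂, f₃} : Set R) :=
      fun x hx => Ideal.subset_span hx
    have hφmem : φ ∈ Ideal.span ({f₁, f₂, f₃} : Set R) := by
      rw [← hab]
      exact add_mem (Ideal.mul_mem_left _ _ (hmem f₁ (by simp)))
        (Ideal.mul_mem_left _ _ (hmem f₂ (by simp)))
    have : f₄ * d = φ - c * f₃ := by rw [← hcd]; ring
    rw [this]
    exact sub_mem hφmem (Ideal.mul_mem_left _ _ (hmem f₃ (by simp)))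
  have hd : d ∈ Ideal.span ({f₁, f₂, f₃} : Set R) := reg_mod_aux _ _ h4 hd4
  -- write d = d₁ f₁ + d₂ f₂ + d₃ f₃
  rw [show ({f₁, f₂, f₃} : Set R) = insert f₁ {f₂, f₃} from rfl,
    Ideal.mem_span_insert] at hd
  obtain ⟨d₁, z, hz, hdz⟩ := hd
  obtain ⟨d₂, d₃, hz23⟩ := Ideal.mem_span_pair.mp hz
  have hdform : d = d₁ * f₁ + d₂ * f₂ + d₃ * f₃ := by rw [hdz, ← hz23]; ring
  -- (c + d₃ f₄) f₃ ∈ (f₁, f₂)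
  have hc3 : f₃ * (c + d₃ * f₄) ∈ Ideal.span ({f₁, f₂} : Set R) := by
    have hf1 : f₁ ∈ Ideal.span ({f₁, f₂} : Set R) := Ideal.subset_span (by simp)
    have hf2 : f₂ ∈ Ideal.span ({f₁, f₂} : Set R) := Ideal.subset_span (by simp)
    have : f₃ * (c + d₃ * f₄) = φ - f₁ * (d₁ * f₄) - f₂ * (d₂ * f₄) := by
      rw [← hcd, hdform]; ring
    rw [this]
    exact sub_mem (sub_mem h12 (Ideal.mul_mem_right _ _ hf1)) (Ideal.mul_mem_right _ _ hf2)
  have hc : c + d₃ * f₄ ∈ Ideal.span ({f₁, f₂} : Set R) := reg_mod_aux _ _ h3 hc3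
  obtain ⟨e₁, e₂, he⟩ := Ideal.mem_span_pair.mp hc
  -- assemble
  have hf1 : f₁ ∈ Ideal.span ({f₁, f₂} : Set R) := Ideal.subset_span (by simp)
  have hf2 : f₂ ∈ Ideal.span ({f₁, f₂} : Set R) := Ideal.subset_span (by simp)
  have hf3 : f₃ ∈ Ideal.span ({f₃, f₄} : Set R) := Ideal.subset_span (by simp)
  have hf4 : f₄ ∈ Ideal.span ({f₃, f₄} : Set R) := Ideal.subset_span (by simp)
  have hform : φ = e₁ * (f₁ * f₃) + e₂ * (f₂ * f₃) + d₁ * (f₁ * f₄) + d₂ * (f₂ * f₄) := by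
    have : φ = (c + d₃ * f₄) * f₃ + (d₁ * f₁ + d₂ * f₂) * f₄ := by
      rw [← hcd, hdform]; ring
    rw [this, ← he]; ring
  rw [hform]
  exact add_mem (add_mem (add_mem
    (Ideal.mul_mem_left _ _ (Ideal.mul_mem_mul hf1 hf3))
    (Ideal.mul_mem_left _ _ (Ideal.mul_mem_mul hf2 hf3)))
    (Ideal.mul_mem_left _ _ (Ideal.mul_mem_mul hf1 hf4)))
    (Ideal.mul_mem_left _ _ (Ideal.mul_mem_mul hf2 hf4))
end
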